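/- Let h_{s,0}, h_{s,1} ∈ ℂ be nonzero with |h_{s,0}| = |h_{s,1}|, and let a(θ) = e^{i(2πd/λ)sin θ} with d, λ > 0. Then there exists θ_d ∈ ℝ with |sin θ_d| ≤ 1 such that h_{s,1} - a(θ_d)·h_{s,0} = 0 if and only if there exists an integer z with |arg(h_{s,1}/h_{s,0})·λ/(2πd) + zλ/d| ≤ 1; in particular when d = λ/2 such θ_d always exists. -/

import Mathlib

open Complex Real

theorem stmt15 (h0 h1 : ℂ) (hh0 : h0 ≠ 0) (hh1 : h1 ≠ 0)
    (heq : ‖h0‖ = ‖h1‖)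
    (d lam : ℝ) (hd : 0 < d) (hlam : 0 < lam) :
    ((∃ θd : ℝ, h1 - Complex.exp ((2 * π * d / lam * Real.sin θd : ℝ) * Complex.I) * h0 = 0) ↔
      ∃ z : ℤ, |Complex.arg (h1 / h0) * lam / (2 * π * d) + z * lam / d| ≤ 1) ∧
    (d = lam / 2 →
      ∃ θd : ℝ, h1 - Complex.exp ((2 * π * d / lam * Real.sin θd : ℝ) * Complex.I) * h0 = 0) := by
  have hπ : (0:ℝ) < π := Real.pi_pos
  set r : ℂ := h1 / h0 with hr
  have hrabs : ‖r‖ = 1 := by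
    rw [hr, norm_div, ← heq, div_self]
    exact (norm_ne_zero_iff.mpr hh0)
  have hrexp : Complex.exp ((Complex.arg r : ℂ) * Complex.I) = r := by
    have := Complex.norm_mul_exp_arg_mul_I r
    rw [hrabs] at this
    simpa using this
  -- characterize the equation
  have hchar : ∀ s : ℝ, (h1 - Complex.exp ((2 * π * d / lam * s : ℝ) * Complex.I) * h0 = 0)
      ↔ Complex.exp ((2 * π * d / lam * s : ℝ) * Complex.I) = r := by
    intro s
    rw [sub_eq_zero, hr, eq_div_iff hh0, eq_comm]
  have main : (∃ θd : ℝ, h1 - Complex.exp ((2 * π * d / lam * Real.sin θd : ℝ) * Complex.I) * h0 = 0) ↔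
      ∃ z : ℤ, |Complex.arg (h1 / h0) * lam / (2 * π * d) + z * lam / d| ≤ 1 := by
    constructor
    · rintro ⟨θd, hθ⟩
      rw [hchar] at hθ
      rw [← hrexp, Complex.exp_eq_exp_iff_exists_int] at hθ
      obtain ⟨n, hn⟩ := hθ
      have hreal : 2 * π * d / lam * Real.sin θd = Complex.arg r + n * (2 * π) := by
        have h2 : ((2 * π * d / lam * Real.sin θd : ℝ) : ℂ) = ((Complex.arg r + n * (2 * π) : ℝ) : ℂ) := by
          apply mul_right_cancel₀ Complex.I_ne_zero
          rw [hn]; push_cast; ring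
        exact_mod_cast h2
      refine ⟨n, ?_⟩
      field_simp [hlam.ne'] at hreal
      have hval : Complex.arg (h1 / h0) * lam / (2 * π * d) + n * lam / d = Real.sin θd := by
        rw [← hr]
        field_simp
        linear_combination (-1) * hreal
      rw [hval]
      exact abs_le.mpr ⟨Real.neg_one_le_sin θd, Real.sin_le_one θd⟩
    · rintro ⟨z, hz⟩
      set s : ℝ := Complex.arg (h1 / h0) * lam / (2 * π * d) + z * lam / d with hs
      refine ⟨Real.arcsin s, ?_⟩
      rw [hchar]
      have hsin : Real.sin (Real.arcsin s) = s :=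
        Real.sin_arcsin (abs_le.mp hz).1 (abs_le.mp hz).2
      rw [hsin]
      have hcs : 2 * π * d / lam * s = Complex.arg r + z * (2 * π) := by
        rw [hs, ← hr]
        field_simp
      rw [hcs]
      push_cast
      rw [add_mul, Complex.exp_add]
      have h1e : Complex.exp ((z : ℂ) * (2 * π) * Complex.I) = 1 := by
        rw [show ((z : ℂ) * (2 * π) * Complex.I) = z * (2 * π * Complex.I) by ring]
        exact Complex.exp_int_mul_two_pi_mul_I z
      rw [h1e, mul_one]
      exact hrexp
  refine ⟨main, ?_⟩
  intro hdl
  rw [main]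
  refine ⟨0, ?_⟩
  rw [hdl]
  have harg := Complex.abs_arg_le_pi (h1 / h0)
  have key : Complex.arg (h1 / h0) * lam / (2 * π * (lam / 2)) + (0 : ℤ) * lam / (lam / 2)
      = Complex.arg (h1 / h0) / π := by
    push_cast
    field_simp
    ring
  rw [key, abs_div, abs_of_pos hπ, div_le_one hπ]
  exact harg
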